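/- Every positive rational number appears exactly once as a label in the Calkin-Wilf tree. -/

import Mathlib

/-- The label of the Calkin–Wilf tree node reached from the root `1/1` by the
given path of steps read left-to-right (`true` = right step `q ↦ q+1`,
`false` = left step `q ↦ q/(q+1)`). -/
def cwOfPath (l : List Bool) : ℚ :=
  l.foldl (fun q s => if s then q + 1 else q / (q + 1)) 1

lemma cw_foldl_pos (l : List Bool) : ∀ q : ℚ, 0 < q →
    0 < l.foldl (fun q s => if s then q + 1 else q / (q + 1)) q := by
  induction l with
  | nil => intro q hq; simpa using hq
  | cons s t ih =>
    intro q hq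
    simp only [List.foldl_cons]
    apply ih
    rcases s with _ | _ <;> simp <;> positivity

lemma cw_pos (l : List Bool) : 0 < cwOfPath l := cw_foldl_pos l 1 one_pos

lemma cw_append (l : List Bool) (s : Bool) :
    cwOfPath (l ++ [s]) = if s then cwOfPath l + 1 else cwOfPath l / (cwOfPath l + 1) := by
  simp [cwOfPath, List.foldl_append]

lemma cw_key : ∀ n : ℕ, ∀ r : ℚ, 0 < r → r.num + r.den < n →
    ∃! l : List Bool, cwOfPath l = r := by
  intro n
  induction n with
  | zero =>
    intro r hr h
    exfalso
    have h1 : 0 < r.num := Rat.num_pos.mpr hr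
    have h2 : 0 < (r.den : ℤ) := by exact_mod_cast r.pos
    omega
  | succ n ih =>
    intro r hr hlt
    have hnum : 0 < r.num := Rat.num_pos.mpr hr
    have hden : 0 < (r.den : ℤ) := by exact_mod_cast r.pos
    have hdq : (0:ℚ) < (r.den : ℚ) := by exact_mod_cast r.pos
    have hd : (r.den : ℚ) ≠ 0 := ne_of_gt hdq
    have hrn : (r.num : ℚ) = r * (r.den : ℚ) := by
      have h := Rat.num_div_den r
      rw [div_eq_iff hd] at h
      exact h
    have hcop : IsCoprime r.num (r.den : ℤ) := by
      rw [Int.isCoprime_iff_gcd_eq_one]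
      exact r.reduced
    rcases lt_trichotomy r 1 with h1 | h1 | h1
    · -- r < 1 : parent is r / (1 - r)
      obtain ⟨p, hp⟩ : ∃ p : ℚ, p = r / (1 - r) := ⟨_, rfl⟩
      have h1r : (0:ℚ) < 1 - r := by linarith
      have hppos : 0 < p := by rw [hp]; exact div_pos hr h1r
      have hstep : p / (p + 1) = r := by
        rw [hp]; field_simp; ring
      have hlt1 : r.num < (r.den : ℤ) := by
        have : (r.num : ℚ) < (r.den : ℚ) := by nlinarith [hrn]
        exact_mod_cast this
      have hdpos : 0 < (r.den : ℤ) - r.num := by omega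
      have hrepr : p = ((r.num : ℤ) : ℚ) / (((r.den : ℤ) - r.num : ℤ) : ℚ) := by
        rw [hp]
        have hne : ((((r.den : ℤ) - r.num : ℤ)) : ℚ) ≠ 0 := by
          push_cast; intro h; rw [sub_eq_zero] at h
          exact absurd (by exact_mod_cast h) (by omega)
        rw [div_eq_div_iff (by linarith) hne]
        push_cast
        linear_combination - hrn
      have hc2 : Nat.Coprime r.num.natAbs ((r.den : ℤ) - r.num).natAbs := by
        show Int.gcd _ _ = 1
        rw [← Int.isCoprime_iff_gcd_eq_one]
        have h := (hcop.symm.add_mul_left_left (-1)).symm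
        simpa [mul_neg, mul_one, ← sub_eq_add_neg] using h
      have hpnum : p.num = r.num := by
        rw [hrepr]; exact Rat.num_div_eq_of_coprime hdpos hc2
      have hpden : (p.den : ℤ) = (r.den : ℤ) - r.num := by
        rw [hrepr]; exact Rat.den_div_eq_of_coprime hdpos hc2
      have hm : p.num + (p.den : ℤ) < n := by rw [hpnum, hpden]; omega
      obtain ⟨l, hl, hu⟩ := ih p hppos hm
      refine ⟨l ++ [false], ?_, ?_⟩
      · show cwOfPath (l ++ [false]) = r
        rw [cw_append, if_neg (by simp), hl, hstep]
      · intro l' hl'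
        rcases l'.eq_nil_or_concat with rfl | ⟨t, b, rfl⟩
        · exfalso; simp [cwOfPath] at hl'; linarith
        · rw [List.concat_eq_append, cw_append] at hl'
          have ht := cw_pos t
          rcases b with _ | _
          · rw [if_neg (by simp)] at hl'
            have hteq : cwOfPath t = p := by
              rw [hp, eq_div_iff (by linarith : (1:ℚ) - r ≠ 0)]
              have h0 : cwOfPath t + 1 ≠ 0 := by positivity
              rw [div_eq_iff h0] at hl'
              linear_combination hl'
            rw [List.concat_eq_append, hu t hteq]
          · exfalso
            rw [if_pos rfl] at hl'
            linarith
    · -- r = 1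
      refine ⟨[], by simp [cwOfPath, h1], ?_⟩
      intro l' hl'
      rcases l'.eq_nil_or_concat with rfl | ⟨t, b, rfl⟩
      · rfl
      · exfalso
        rw [List.concat_eq_append, cw_append] at hl'
        have ht := cw_pos t
        rcases b with _ | _
        · rw [if_neg (by simp), h1] at hl'
          have h0 : cwOfPath t + 1 ≠ 0 := by positivity
          rw [div_eq_one_iff_eq h0] at hl'
          linarith
        · rw [if_pos rfl, h1] at hl'
          linarith
    · -- r > 1 : parent is r - 1
      obtain ⟨p, hp⟩ : ∃ p : ℚ, p = r - 1 := ⟨_, rfl⟩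
      have hppos : 0 < p := by rw [hp]; linarith
      have hgt1 : (r.den : ℤ) < r.num := by
        have : (r.den : ℚ) < (r.num : ℚ) := by nlinarith [hrn]
        exact_mod_cast this
      have hrepr : p = ((r.num - (r.den : ℤ) : ℤ) : ℚ) / (((r.den : ℤ)) : ℚ) := by
        rw [hp, eq_div_iff (by push_cast; linarith)]
        push_cast
        linear_combination -hrn
      have hc2 : Nat.Coprime (r.num - (r.den : ℤ)).natAbs ((r.den : ℤ)).natAbs := by
        show Int.gcd _ _ = 1
        rw [← Int.isCoprime_iff_gcd_eq_one]
        have h := hcop.add_mul_left_left (-1)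
        simpa [mul_neg, mul_one, ← sub_eq_add_neg] using h
      have hpnum : p.num = r.num - r.den := by
        rw [hrepr]; exact Rat.num_div_eq_of_coprime hden hc2
      have hpden : (p.den : ℤ) = (r.den : ℤ) := by
        rw [hrepr]; exact Rat.den_div_eq_of_coprime hden hc2
      have hm : p.num + (p.den : ℤ) < n := by rw [hpnum, hpden]; omega
      obtain ⟨l, hl, hu⟩ := ih p hppos hm
      refine ⟨l ++ [true], ?_, ?_⟩
      · show cwOfPath (l ++ [true]) = r
        rw [cw_append, if_pos rfl, hl, hp]; ring
      · intro l' hl'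
        rcases l'.eq_nil_or_concat with rfl | ⟨t, b, rfl⟩
        · exfalso; simp [cwOfPath] at hl'; linarith
        · rw [List.concat_eq_append, cw_append] at hl'
          have ht := cw_pos t
          rcases b with _ | _
          · exfalso
            rw [if_neg (by simp)] at hl'
            have : cwOfPath t / (cwOfPath t + 1) < 1 := by
              rw [div_lt_one (by positivity)]; linarith
            linarith
          · rw [if_pos rfl] at hl'
            have hteq : cwOfPath t = p := by rw [hp]; linarith
            rw [List.concat_eq_append, hu t hteq]

/-- Every positive rational number appears exactly once as a label in the
Calkin–Wilf tree. -/
theorem cw_exists_unique (r : ℚ) (hr : 0 < r) : ∃! l : List Bool, cwOfPath l = r := by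
  exact cw_key (r.num + r.den).toNat.succ r hr (by
    have h1 : 0 < r.num := Rat.num_pos.mpr hr
    have h2 : 0 < (r.den : ℤ) := by exact_mod_cast r.pos
    omega)
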